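/- arXiv:2006.00747 — 4 statements merged into one kernel-verified Lean document; each statement's English description precedes it below -/
import Mathlib

section
/- Let F be a standard Fréchet random variable with tail index 1. Then for every δ > 1, lim_{a→∞} a · E[(1 - (a/F)^{1/δ})_+] = 1/(δ+1), where (x)_+ = max(x,0). -/
open MeasureTheory ProbabilityTheory Filter
open scoped ENNReal Topology

lemma aux_tendsto (c : ℝ) :
    Tendsto (fun a : ℝ => a * (1 - Real.exp (-c / a))) atTop (𝓝 c) := by
  have hf : HasDerivAt (fun x : ℝ => 1 - Real.exp (-c * x)) c 0 := by
    have h1 : HasDerivAt (fun x : ℝ => -c * x) (-c) 0 := by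
      simpa using (hasDerivAt_id (0 : ℝ)).const_mul (-c)
    have h2 := h1.exp
    simpa using h2.const_sub 1
  have hs := hasDerivAt_iff_tendsto_slope.mp hf
  have hcomp : Tendsto (fun a : ℝ => (a : ℝ)⁻¹) atTop (𝓝[≠] 0) :=
    tendsto_inv_atTop_nhdsGT_zero.mono_right (nhdsWithin_mono _ (fun x hx => ne_of_gt hx))
  refine (hs.comp hcomp).congr' ?_
  filter_upwards [eventually_gt_atTop (0 : ℝ)] with a ha
  have ha' : a ≠ 0 := ne_of_gt ha
  simp only [Function.comp, slope_def_field, Real.exp_zero]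
  rw [div_eq_mul_inv, neg_div, div_eq_mul_inv]
  field_simp
  rw [mul_zero, neg_zero, Real.exp_zero]
  ring

lemma aux_int (δ : ℝ) (hδ : 0 < δ) :
    ∫ t in Set.Ioo (0:ℝ) 1, (1 - t) ^ δ = 1 / (δ + 1) := by
  rw [← integral_Ioc_eq_integral_Ioo, ← intervalIntegral.integral_of_le (zero_le_one)]
  have h := intervalIntegral.integral_comp_sub_left (a := 0) (b := 1) (fun x : ℝ => x ^ δ) 1
  simp only [sub_zero, sub_self] at h
  rw [h, integral_rpow (Or.inl (by linarith))]
  rw [Real.one_rpow, Real.zero_rpow (by positivity)]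
  ring

/-- For a standard Fréchet random variable `F` with tail index 1 and `δ > 1`,
`lim_{a→∞} a · E[(1 - (a/F)^(1/δ))₊] = 1/(δ+1)`. -/
theorem frechet_first_moment_computation {Ω : Type*} [MeasureSpace Ω]
    [IsProbabilityMeasure (ℙ : Measure Ω)]
    (F : Ω → ℝ) (hmeas : Measurable F)
    (hcdf : ∀ s : ℝ, 0 < s →
      (ℙ : Measure Ω) {ω | F ω ≤ s} = ENNReal.ofReal (Real.exp (-1 / s)))
    (hcdf0 : ∀ s : ℝ, s ≤ 0 → (ℙ : Measure Ω) {ω | F ω ≤ s} = 0)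
    (δ : ℝ) (hδ : 1 < δ) :
    Tendsto (fun a : ℝ => a * ∫ ω, max (1 - (a / F ω) ^ (1 / δ)) 0 ∂(ℙ : Measure Ω))
      atTop (𝓝 (1 / (δ + 1))) := by
  have hδ0 : 0 < δ := by linarith
  have hF0 : (ℙ : Measure Ω) {ω | F ω ≤ 0} = 0 := hcdf0 0 le_rfl
  have haeF : ∀ᵐ ω ∂(ℙ : Measure Ω), 0 < F ω := by
    rw [ae_iff]; simpa [not_lt] using hF0
  have key : ∀ a : ℝ, 0 < a →
      a * ∫ ω, max (1 - (a / F ω) ^ (1 / δ)) 0 ∂(ℙ : Measure Ω)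
        = ∫ t in Set.Ioo (0:ℝ) 1, a * (1 - Real.exp (-(1 - t) ^ δ / a)) := by
    intro a ha
    set f : Ω → ℝ := fun ω => max (1 - (a / F ω) ^ (1 / δ)) 0 with hfdef
    have hfm : Measurable f := by
      apply Measurable.max _ measurable_const
      refine measurable_const.sub ?_
      exact (Real.continuous_rpow_const (by positivity)).measurable.comp
        (measurable_const.div hmeas)
    have hf_nn : 0 ≤ᵐ[(ℙ : Measure Ω)] f := .of_forall fun ω => le_max_right _ _
    have hfi : Integrable f (ℙ : Measure Ω) := by
      refine (integrable_const (1:ℝ)).mono' hfm.aestronglyMeasurable ?_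
      filter_upwards [haeF] with ω hω
      rw [Real.norm_eq_abs, abs_of_nonneg (le_max_right _ _)]
      refine max_le ?_ zero_le_one
      have h1 : 0 < (a / F ω) ^ (1/δ) := Real.rpow_pos_of_pos (div_pos ha hω) _
      linarith
    rw [hfi.integral_eq_integral_meas_lt hf_nn]
    have hpt : Set.EqOn (fun t => ((ℙ : Measure Ω) {ω | t < f ω}).toReal)
        (Set.indicator (Set.Ioo (0:ℝ) 1) (fun t => 1 - Real.exp (-(1 - t) ^ δ / a)))
        (Set.Ioi (0:ℝ)) := by
      intro t ht
      simp only
      rcases lt_or_ge t 1 with h1 | h1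
      · have htm : t ∈ Set.Ioo (0:ℝ) 1 := ⟨ht, h1⟩
        rw [Set.indicator_of_mem htm]
        have h1t : (0:ℝ) < 1 - t := by linarith
        have hrp : (0:ℝ) < (1 - t) ^ δ := Real.rpow_pos_of_pos h1t δ
        set s := a / (1 - t) ^ δ with hs
        have hsp : 0 < s := div_pos ha hrp
        have hsets : {ω | t < f ω} =ᵐ[(ℙ : Measure Ω)] {ω | s < F ω} := by
          rw [Filter.eventuallyEq_set]
          filter_upwards [haeF] with ω hω
          simp only [Set.mem_setOf_eq, hfdef, lt_max_iff]
          have hax : 0 ≤ a / F ω := (div_pos ha hω).le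
          have ht0 : (0:ℝ) < t := ht
          constructor
          · rintro (h | h)
            · rw [one_div] at h
              have h2 : (a / F ω) ^ δ⁻¹ < 1 - t := by linarith
              rw [Real.rpow_inv_lt_iff_of_pos hax h1t.le hδ0] at h2
              rw [div_lt_iff₀ hω] at h2
              rw [hs, div_lt_iff₀ hrp]
              linarith [h2, mul_comm (F ω) ((1-t)^δ)]
            · linarith
          · intro h
            left
            rw [hs, div_lt_iff₀ hrp] at h
            have h2 : a / F ω < (1 - t) ^ δ := by
              rw [div_lt_iff₀ hω]; linarith [mul_comm (F ω) ((1-t)^δ)]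
            rw [← Real.rpow_inv_lt_iff_of_pos hax h1t.le hδ0] at h2
            rw [one_div]
            linarith
        rw [measure_congr hsets]
        have hcompl : {ω | s < F ω} = {ω | F ω ≤ s}ᶜ := by
          ext ω; simp [not_le]
        rw [hcompl, prob_compl_eq_one_sub (measurableSet_le hmeas measurable_const),
          hcdf s hsp]
        have hexp : Real.exp (-1 / s) ≤ 1 := by
          rw [Real.exp_le_one_iff, neg_div]
          exact neg_nonpos.mpr (by positivity)
        rw [ENNReal.toReal_sub_of_le (ENNReal.ofReal_le_one.mpr hexp) ENNReal.one_ne_top]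
        rw [ENNReal.toReal_one, ENNReal.toReal_ofReal (Real.exp_nonneg _)]
        congr 2
        rw [hs, neg_div, neg_div, one_div_div]
      · rw [Set.indicator_of_notMem (by simp [Set.mem_Ioo]; intro; linarith)]
        have hz : (ℙ : Measure Ω) {ω | t < f ω} = 0 := by
          refine measure_mono_null ?_ hF0
          intro ω hω
          simp only [Set.mem_setOf_eq] at hω ⊢
          by_contra hc
          push_neg at hc
          have hp : 0 < (a / F ω) ^ (1/δ) := Real.rpow_pos_of_pos (div_pos ha hc) _
          have hlt : f ω < 1 := by
            apply max_lt <;> linarith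
          linarith
        simp [hz]
    simp only [measureReal_def]
    rw [setIntegral_congr_fun measurableSet_Ioi hpt]
    rw [setIntegral_indicator measurableSet_Ioo,
      Set.inter_eq_self_of_subset_right (Set.Ioo_subset_Ioi_self)]
    rw [← integral_const_mul]
  have hlim : Tendsto (fun a : ℝ =>
      ∫ t in Set.Ioo (0:ℝ) 1, a * (1 - Real.exp (-(1 - t) ^ δ / a)))
      atTop (𝓝 (1 / (δ + 1))) := by
    rw [← aux_int δ hδ0]
    apply tendsto_integral_filter_of_dominated_convergence (fun _ => (1:ℝ))
    · filter_upwards with a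
      apply Measurable.aestronglyMeasurable
      refine measurable_const.mul (measurable_const.sub (Real.measurable_exp.comp ?_))
      exact (((Real.continuous_rpow_const hδ0.le).measurable.comp
        (measurable_const.sub measurable_id)).neg.div_const a)
    · filter_upwards [eventually_ge_atTop (1:ℝ)] with a ha
      rw [ae_restrict_iff' measurableSet_Ioo]
      filter_upwards with t ht
      obtain ⟨ht0, ht1⟩ := ht
      have hap : (0:ℝ) < a := lt_of_lt_of_le one_pos ha
      have h1t : (0:ℝ) < 1 - t := by linarith
      have hc0 : 0 < (1 - t) ^ δ := Real.rpow_pos_of_pos h1t δ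
      have hc1 : (1 - t) ^ δ ≤ 1 := Real.rpow_le_one h1t.le (by linarith) hδ0.le
      have hx : (0:ℝ) ≤ (1 - t) ^ δ / a := by positivity
      have hle : Real.exp (-(1 - t) ^ δ / a) ≤ 1 := by
        rw [Real.exp_le_one_iff, neg_div]; linarith
      have hge : 1 - (1 - t) ^ δ / a ≤ Real.exp (-(1 - t) ^ δ / a) := by
        have h := Real.add_one_le_exp (-(1 - t) ^ δ / a)
        rw [neg_div] at h ⊢
        linarith
      rw [Real.norm_eq_abs, abs_of_nonneg (mul_nonneg hap.le (by linarith))]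
      have hmul : a * (1 - Real.exp (-(1 - t) ^ δ / a)) ≤ a * ((1 - t) ^ δ / a) :=
        mul_le_mul_of_nonneg_left (by linarith) hap.le
      rw [mul_div_cancel₀ _ (ne_of_gt hap)] at hmul
      linarith
    · exact integrableOn_const measure_Ioo_lt_top.ne
    · rw [ae_restrict_iff' measurableSet_Ioo]
      filter_upwards with t ht
      exact aux_tendsto ((1 - t) ^ δ)
  refine hlim.congr' ?_
  filter_upwards [eventually_gt_atTop (0:ℝ)] with a ha
  exact (key a ha).symm
end

section
/- Let F be a standard Fréchet random variable with tail index 1, and let δ ∈ (1,2) and η > 0. Then lim_{a→∞} a · E[min(η², (F/a)^{2/δ})] = 2η^{2-δ}/(2-δ). -/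
open MeasureTheory ProbabilityTheory Filter
open scoped ENNReal Topology

lemma tendsto_mul_one_sub_exp (c : ℝ) (hc : 0 < c) :
    Tendsto (fun a : ℝ => a * (1 - Real.exp (-(c / a)))) atTop (𝓝 c) := by
  have hderiv : HasDerivAt (fun u : ℝ => 1 - Real.exp (-u)) 1 0 := by
    have h1 : HasDerivAt (fun u : ℝ => Real.exp (-u)) (-1) 0 := by
      have := (Real.hasDerivAt_exp (-0)).comp 0 (hasDerivAt_neg 0)
      simpa [Function.comp_def] using this
    simpa using h1.const_sub 1
  have hslope : Tendsto (slope (fun u : ℝ => 1 - Real.exp (-u)) 0) (𝓝[≠] 0) (𝓝 1) :=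
    hasDerivAt_iff_tendsto_slope.mp hderiv
  have hu : Tendsto (fun a : ℝ => c / a) atTop (𝓝[≠] 0) := by
    apply tendsto_nhdsWithin_of_tendsto_nhds_of_eventually_within
    · simpa using tendsto_const_nhds.div_atTop (f := fun _ : ℝ => c) tendsto_id
    · filter_upwards [eventually_gt_atTop 0] with a ha
      exact (div_pos hc ha).ne'
  have h2 := (hslope.comp hu).const_mul c
  refine Tendsto.congr' ?_ (by simpa using h2)
  filter_upwards [eventually_gt_atTop 0] with a ha
  have hca : c / a ≠ 0 := (div_pos hc ha).ne'
  simp only [Function.comp, slope_def_field]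
  simp only [Real.exp_zero, neg_zero, sub_zero]
  field_simp
  ring

/-- For a standard Fréchet random variable `F` with tail index 1, `δ ∈ (1,2)` and `η > 0`,
`lim_{a→∞} a · E[min (η², (F/a)^(2/δ))] = 2 η^(2-δ)/(2-δ)`. -/
theorem frechet_second_moment_computation {Ω : Type*} [MeasureSpace Ω]
    [IsProbabilityMeasure (ℙ : Measure Ω)]
    (F : Ω → ℝ) (hmeas : Measurable F)
    (hcdf : ∀ s : ℝ, 0 < s →
      (ℙ : Measure Ω) {ω | F ω ≤ s} = ENNReal.ofReal (Real.exp (-1 / s)))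
    (hcdf0 : ∀ s : ℝ, s ≤ 0 → (ℙ : Measure Ω) {ω | F ω ≤ s} = 0)
    (δ η : ℝ) (hδ : δ ∈ Set.Ioo (1 : ℝ) 2) (hη : 0 < η) :
    Tendsto (fun a : ℝ => a * ∫ ω, min (η ^ 2) ((F ω / a) ^ (2 / δ)) ∂(ℙ : Measure Ω))
      atTop (𝓝 (2 * η ^ (2 - δ) / (2 - δ))) := by
  obtain ⟨hδ1, hδ2⟩ := hδ
  have hδ0 : (0 : ℝ) < δ := lt_trans one_pos hδ1
  set q : ℝ := δ / 2 with hq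
  have hq0 : 0 < q := by positivity
  have hq1 : q < 1 := by rw [hq]; linarith
  have hp0 : (0 : ℝ) < 2 / δ := by positivity
  have hpinv : (2 / δ)⁻¹ = q := by rw [inv_div]
  have hη2 : (0 : ℝ) < η ^ 2 := by positivity
  have h2δ : (0 : ℝ) < 2 - δ := by linarith
  -- a.e. positivity of F
  have hFpos : ∀ᵐ ω ∂(ℙ : Measure Ω), 0 < F ω := by
    rw [ae_iff]
    have h0 := hcdf0 0 le_rfl
    simpa [not_lt] using h0
  -- key identity
  have key : ∀ a : ℝ, 0 < a →
      a * ∫ ω, min (η ^ 2) ((F ω / a) ^ (2 / δ)) ∂(ℙ : Measure Ω)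
        = ∫ t in Set.Ioo 0 (η ^ 2), a * (1 - Real.exp (-(t ^ (-q) / a))) := by
    intro a ha
    have rpm : Measurable fun x : ℝ => x ^ (2 / δ) := by measurability
    have gmeas : Measurable fun ω => (F ω / a) ^ (2 / δ) :=
      rpm.comp (hmeas.div_const a)
    have mmeas : AEStronglyMeasurable
        (fun ω => min (η ^ 2) ((F ω / a) ^ (2 / δ))) (ℙ : Measure Ω) :=
      (measurable_const.min gmeas).aestronglyMeasurable
    have hnn : 0 ≤ᵐ[(ℙ : Measure Ω)] fun ω => min (η ^ 2) ((F ω / a) ^ (2 / δ)) := by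
      filter_upwards [hFpos] with ω hω
      exact le_min hη2.le (Real.rpow_nonneg (div_pos hω ha).le _)
    have hint : Integrable (fun ω => min (η ^ 2) ((F ω / a) ^ (2 / δ))) (ℙ : Measure Ω) := by
      refine Integrable.mono' (integrable_const (η ^ 2)) mmeas ?_
      filter_upwards [hnn] with ω hω
      rw [Real.norm_eq_abs, abs_of_nonneg hω]
      exact min_le_left _ _
    rw [hint.integral_eq_integral_meas_lt hnn]
    simp only [measureReal_def]
    have hptw : ∀ t ∈ Set.Ioi (0:ℝ),
        ENNReal.toReal ((ℙ : Measure Ω) {ω | t < min (η ^ 2) ((F ω / a) ^ (2 / δ))})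
          = Set.indicator (Set.Ioo 0 (η ^ 2))
              (fun t => 1 - Real.exp (-(t ^ (-q) / a))) t := by
      intro t ht
      rcases lt_or_ge t (η ^ 2) with htη | htη
      · have htmem : t ∈ Set.Ioo 0 (η ^ 2) := ⟨ht, htη⟩
        rw [Set.indicator_of_mem htmem]
        set s : ℝ := a * t ^ q with hs
        have hspos : 0 < s := mul_pos ha (Real.rpow_pos_of_pos ht _)
        have hSnull : (ℙ : Measure Ω) {ω | 0 < F ω}ᶜ = 0 := by
          rw [Set.compl_setOf]
          simpa [not_lt] using hcdf0 0 le_rfl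
        have hset : {ω | t < min (η ^ 2) ((F ω / a) ^ (2 / δ))} ∩ {ω | 0 < F ω}
            = {ω | F ω ≤ s}ᶜ ∩ {ω | 0 < F ω} := by
          ext ω
          simp only [Set.mem_inter_iff, Set.mem_setOf_eq, Set.mem_compl_iff, not_le]
          constructor
          · rintro ⟨h1, h2⟩
            refine ⟨?_, h2⟩
            have h3 : t < (F ω / a) ^ (2 / δ) := (lt_min_iff.mp h1).2
            have h4 : t ^ (2 / δ)⁻¹ < F ω / a :=
              (Real.rpow_inv_lt_iff_of_pos (le_of_lt ht) (div_pos h2 ha).le hp0).mpr h3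
            rw [hpinv] at h4
            rw [hs]
            calc a * t ^ q < a * (F ω / a) := by
                  exact (mul_lt_mul_iff_right₀ ha).mpr h4
              _ = F ω := by field_simp
          · rintro ⟨h1, h2⟩
            refine ⟨lt_min htη ?_, h2⟩
            have h4 : t ^ (2 / δ)⁻¹ < F ω / a := by
              rw [hpinv, lt_div_iff₀ ha]
              calc t ^ q * a = a * t ^ q := mul_comm _ _
                _ < F ω := h1
            exact (Real.rpow_inv_lt_iff_of_pos (le_of_lt ht) (div_pos h2 ha).le hp0).mp h4
        have hmeq : (ℙ : Measure Ω) {ω | t < min (η ^ 2) ((F ω / a) ^ (2 / δ))}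
            = (ℙ : Measure Ω) {ω | F ω ≤ s}ᶜ := by
          rw [← measure_inter_conull hSnull, hset, measure_inter_conull hSnull]
        have hms : MeasurableSet {ω | F ω ≤ s} := hmeas measurableSet_Iic
        have hcompl : (ℙ : Measure Ω) {ω | F ω ≤ s}ᶜ
            = 1 - ENNReal.ofReal (Real.exp (-1 / s)) := by
          rw [measure_compl hms (measure_ne_top _ _), measure_univ, hcdf s hspos]
        have hexple : Real.exp (-1 / s) ≤ 1 := by
          apply Real.exp_le_one_iff.mpr
          rw [neg_div]
          exact neg_nonpos.mpr (by positivity)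
        rw [hmeq, hcompl, ENNReal.toReal_sub_of_le
          (ENNReal.ofReal_le_one.mpr hexple) ENNReal.one_ne_top,
          ENNReal.toReal_one, ENNReal.toReal_ofReal (Real.exp_nonneg _)]
        congr 2
        have htq : (t : ℝ) ^ q ≠ 0 := (Real.rpow_pos_of_pos ht _).ne'
        have ha' : a ≠ 0 := ha.ne'
        rw [hs, Real.rpow_neg (le_of_lt ht)]
        field_simp
      · have hempty : {ω | t < min (η ^ 2) ((F ω / a) ^ (2 / δ))} = ∅ := by
          ext ω
          simp only [Set.mem_setOf_eq, Set.mem_empty_iff_false, iff_false, not_lt]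
          exact le_trans (min_le_left _ _) htη
        rw [hempty, Set.indicator_of_notMem (by simp [htη.not_gt]), measure_empty]
        simp
    rw [setIntegral_congr_fun measurableSet_Ioi hptw,
      setIntegral_indicator measurableSet_Ioo,
      Set.inter_eq_self_of_subset_right (Set.Ioo_subset_Ioi_self),
      ← integral_const_mul]
  -- the limit integral
  have hbound_int : IntegrableOn (fun t : ℝ => t ^ (-q)) (Set.Ioo 0 (η ^ 2)) := by
    have h1 : IntervalIntegrable (fun t : ℝ => t ^ (-q)) volume 0 (η ^ 2) :=
      intervalIntegral.intervalIntegrable_rpow' (by linarith)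
    exact ((intervalIntegrable_iff_integrableOn_Ioc_of_le hη2.le).mp h1).mono_set
      Set.Ioo_subset_Ioc_self
  have hval : ∫ t in Set.Ioo 0 (η ^ 2), t ^ (-q) = 2 * η ^ (2 - δ) / (2 - δ) := by
    rw [← integral_Ioc_eq_integral_Ioo, ← intervalIntegral.integral_of_le hη2.le,
      integral_rpow (Or.inl (by linarith))]
    rw [Real.zero_rpow (by linarith)]
    have hη2r : (η ^ 2 : ℝ) = η ^ ((2 : ℕ) : ℝ) := (Real.rpow_natCast η 2).symm
    rw [hη2r, ← Real.rpow_mul hη.le]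
    have : ((2 : ℕ) : ℝ) * (-q + 1) = 2 - δ := by push_cast; rw [hq]; ring
    rw [this]
    rw [sub_zero]
    have hne : -q + 1 ≠ 0 := by rw [hq]; intro h; linarith [h]
    field_simp
    rw [hq]; ring
  -- dominated convergence
  have hmain : Tendsto (fun a : ℝ => ∫ t in Set.Ioo 0 (η ^ 2),
      a * (1 - Real.exp (-(t ^ (-q) / a)))) atTop (𝓝 (2 * η ^ (2 - δ) / (2 - δ))) := by
    rw [← hval]
    apply tendsto_integral_filter_of_dominated_convergence (fun t : ℝ => t ^ (-q))
    · apply Filter.Eventually.of_forall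
      intro a
      have m1 : Measurable fun t : ℝ => a * (1 - Real.exp (-(t ^ (-q) / a))) := by
        apply Measurable.const_mul
        apply Measurable.const_sub
        have rpm : Measurable fun t : ℝ => t ^ (-q) := by measurability
        exact Real.measurable_exp.comp ((rpm.div_const a).neg)
      exact m1.aestronglyMeasurable
    · filter_upwards [eventually_gt_atTop (0:ℝ)] with a ha
      filter_upwards [ae_restrict_mem measurableSet_Ioo] with t htm
      have hc : 0 < t ^ (-q) := Real.rpow_pos_of_pos htm.1 _
      have hx : 0 ≤ t ^ (-q) / a := (div_pos hc ha).le
      have h1 : Real.exp (-(t ^ (-q) / a)) ≤ 1 :=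
        Real.exp_le_one_iff.mpr (neg_nonpos.mpr hx)
      have h2 : 1 - Real.exp (-(t ^ (-q) / a)) ≤ t ^ (-q) / a := by
        have := Real.add_one_le_exp (-(t ^ (-q) / a))
        linarith
      rw [Real.norm_eq_abs, abs_of_nonneg (by nlinarith)]
      calc a * (1 - Real.exp (-(t ^ (-q) / a))) ≤ a * (t ^ (-q) / a) := by
            exact mul_le_mul_of_nonneg_left h2 ha.le
        _ = t ^ (-q) := by field_simp
    · exact hbound_int
    · filter_upwards [ae_restrict_mem measurableSet_Ioo] with t htm
      exact tendsto_mul_one_sub_exp _ (Real.rpow_pos_of_pos htm.1 _)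
  refine Tendsto.congr' ?_ hmain
  filter_upwards [eventually_gt_atTop (0:ℝ)] with a ha
  exact (key a ha).symm
end

section
/- Let δ ∈ (0,1) and let (G_j)_{j≥1} be i.i.d. random variables with P(G_1 > 0) > 0 and E[|G_1|] < ∞. Then almost surely there exists a (random) index I such that both G_I > 0 and ∑_{j≥I} δ^j G_{j+1} > 0. -/
open MeasureTheory ProbabilityTheory Filter
open scoped ENNReal NNReal Topology

lemma measurable_tsum_real {Ω : Type*} {m : MeasurableSpace Ω} (f : ℕ → Ω → ℝ)
    (hf : ∀ n, Measurable[m] (f n)) :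
    Measurable[m] (fun ω => ∑' n, f n ω) := by
  have hcond : Measurable[m] (fun ω => ∑' n, (‖f n ω‖₊ : ℝ≥0∞)) :=
    Measurable.ennreal_tsum (fun n => ((hf n).nnnorm).coe_nnreal_ennreal)
  set A : Set Ω := {ω | (∑' n, (‖f n ω‖₊ : ℝ≥0∞)) ≠ ∞} with hAdef
  have hA : MeasurableSet[m] A := (hcond (measurableSet_singleton ∞)).compl
  have hAiff : ∀ ω, ω ∈ A ↔ Summable (fun n => f n ω) := by
    intro ω
    rw [hAdef, Set.mem_setOf_eq, ENNReal.tsum_coe_ne_top_iff_summable]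
    constructor
    · intro h
      have := NNReal.summable_coe.2 h
      simp only [coe_nnnorm, Real.norm_eq_abs] at this
      exact summable_norm_iff.1 (by simpa [Real.norm_eq_abs] using this)
    · intro h
      have := h.abs
      rw [← NNReal.summable_coe]
      simpa [coe_nnnorm, Real.norm_eq_abs] using this
  set F : ℕ → Ω → ℝ := fun N => A.indicator (fun ω => ∑ n ∈ Finset.range N, f n ω) with hFdef
  have hFmeas : ∀ N, Measurable[m] (F N) := fun N =>
    Measurable.indicator (Finset.measurable_sum _ fun n _ => hf n) hA
  have htend : ∀ ω, Tendsto (fun N => F N ω) atTop (𝓝 (∑' n, f n ω)) := by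
    intro ω
    by_cases hω : ω ∈ A
    · have hs : Summable (fun n => f n ω) := (hAiff ω).1 hω
      simpa [hFdef, Set.indicator_of_mem hω] using hs.hasSum.tendsto_sum_nat
    · have hs : ¬ Summable (fun n => f n ω) := fun h => hω ((hAiff ω).2 h)
      simp only [hFdef, Set.indicator_of_notMem hω, tsum_eq_zero_of_not_summable hs]
      exact tendsto_const_nhds
  exact measurable_of_tendsto_metrizable' atTop hFmeas (tendsto_pi_nhds.2 htend)

lemma measurable_tsum_ennreal' {Ω : Type*} {m : MeasurableSpace Ω} (f : ℕ → Ω → ℝ≥0∞)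
    (hf : ∀ n, Measurable[m] (f n)) : Measurable[m] (fun ω => ∑' n, f n ω) :=
  Measurable.ennreal_tsum hf

lemma measurable_H_term {Ω : Type*} {m : MeasurableSpace Ω} {g : Ω → ℝ}
    (hg : Measurable[m] g) (c : ℝ≥0∞) :
    Measurable[m] (fun ω => c * (‖g ω‖₊ : ℝ≥0∞)) :=
  (hg.nnnorm.coe_nnreal_ennreal).const_mul c

set_option maxHeartbeats 1600000 in
/-- For `δ ∈ (0,1)` and i.i.d. integrable `(G j)_{j ≥ 1}` with `P(G 1 > 0) > 0`,
almost surely there exists a (random) index `I ≥ 1` such that `G I > 0` and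
`∑_{j ≥ I} δ^j G (j+1) > 0`. -/
theorem exists_index_positive_tail_sum {Ω : Type*} [MeasureSpace Ω]
    [IsProbabilityMeasure (ℙ : Measure Ω)]
    (δ : ℝ) (hδ : δ ∈ Set.Ioo (0 : ℝ) 1)
    (G : ℕ → Ω → ℝ)
    (hmeas : ∀ j, Measurable (G j))
    (hindep : iIndepFun G ℙ)
    (hid : ∀ j, 1 ≤ j → IdentDistrib (G j) (G 1) ℙ ℙ)
    (hint : Integrable (G 1) (ℙ : Measure Ω))
    (hpos : 0 < (ℙ : Measure Ω) {ω | 0 < G 1 ω}) :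
    ∀ᵐ ω ∂(ℙ : Measure Ω), ∃ I : ℕ, 1 ≤ I ∧ 0 < G I ω ∧
      0 < ∑' j : ℕ, δ ^ (I + j) * G (I + j + 1) ω := by
  obtain ⟨hδ0, hδ1⟩ := hδ
  -- sub-σ-algebras
  set m' : ℕ → MeasurableSpace Ω := fun i => MeasurableSpace.comap (G i) inferInstance with hm'def
  have hI : iIndep m' ℙ := hindep.iIndep
  have h_le : ∀ i, m' i ≤ (inferInstance : MeasurableSpace Ω) := fun i => (hmeas i).comap_le
  have hGm' : ∀ i, Measurable[m' i] (G i) := fun i => measurable_iff_comap_le.2 le_rfl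
  set 𝒯 : ℕ → MeasurableSpace Ω := fun n => ⨆ i, ⨆ (_ : n ≤ i), m' i with h𝒯def
  have h𝒯le : ∀ n, 𝒯 n ≤ (inferInstance : MeasurableSpace Ω) :=
    fun n => iSup₂_le fun i _ => h_le i
  have h𝒯mono : ∀ {a b : ℕ}, a ≤ b → 𝒯 b ≤ 𝒯 a :=
    fun {a b} hab => iSup₂_le fun i hi => le_iSup₂ (f := fun i _ => m' i) i (hab.trans hi)
  have hG𝒯 : ∀ n i, n ≤ i → Measurable[𝒯 n] (G i) :=
    fun n i hni => (hGm' i).mono (le_iSup₂ (f := fun i _ => m' i) i hni) le_rfl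
  -- the sums
  set S : ℕ → Ω → ℝ := fun I ω => ∑' j, δ ^ j * G (I + 1 + j) ω with hSdef
  have hS𝒯 : ∀ n I, n ≤ I + 1 → Measurable[𝒯 n] (S I) := by
    intro n I hn
    exact measurable_tsum_real _ (fun j => ((hG𝒯 n (I + 1 + j) (by omega)).const_mul _))
  -- the events
  set E : ℕ → Set Ω := fun n => {ω | ∃ I, n ≤ I ∧ 0 < G I ω ∧ 0 < S I ω} with hEdef
  have hE_anti : Antitone E := by
    intro a b hab ω hω
    obtain ⟨I, hbI, h1, h2⟩ := hω
    exact ⟨I, hab.trans hbI, h1, h2⟩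
  have hE_meas : ∀ n, MeasurableSet[𝒯 n] (E n) := by
    intro n
    have : E n = ⋃ I, ⋃ (_ : n ≤ I), ((G I ⁻¹' Set.Ioi 0) ∩ (S I ⁻¹' Set.Ioi 0)) := by
      ext ω
      simp only [hEdef, Set.mem_setOf_eq, Set.mem_iUnion, Set.mem_inter_iff, Set.mem_preimage,
        Set.mem_Ioi]
      tauto
    rw [this]
    exact MeasurableSet.iUnion fun I => MeasurableSet.iUnion fun hI =>
      ((hG𝒯 n I hI measurableSet_Ioi).inter
        (hS𝒯 n I (hI.trans (Nat.le_succ I)) measurableSet_Ioi))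
  -- the tail event
  set t : Set Ω := ⋂ n, E n with htdef
  have ht_tail : MeasurableSet[Filter.limsup m' atTop] t := by
    rw [limsup_eq_iInf_iSup_of_nat]
    rw [MeasurableSpace.measurableSet_iInf]
    intro n
    have ht_eq : t = ⋂ k, E (n + k) := by
      apply Set.Subset.antisymm
      · exact fun ω hω => Set.mem_iInter.2 fun k => Set.mem_iInter.1 hω (n + k)
      · intro ω hω
        refine Set.mem_iInter.2 fun j => ?_
        exact hE_anti (Nat.le_add_left j n) (Set.mem_iInter.1 hω j)
    rw [ht_eq]
    exact MeasurableSet.iInter fun k => (h𝒯mono (Nat.le_add_right n k)) _ (hE_meas (n + k))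
  have h01 : ℙ t = 0 ∨ ℙ t = 1 :=
    measure_zero_or_one_of_measurableSet_limsup_atTop h_le hI ht_tail
  -- lower bound for ℙ (E n)
  have key : ∃ ε : ℝ≥0∞, ε ≠ 0 ∧ ∀ n, ε ≤ ℙ (E n) := by
    -- choose a level c with positive probability
    obtain ⟨c, hc, hq0⟩ : ∃ c : ℝ, 0 < c ∧ ℙ {ω | c < G 1 ω} ≠ 0 := by
      by_contra hcon
      push_neg at hcon
      have hsub : {ω | 0 < G 1 ω} ⊆ ⋃ m : ℕ, {ω | (1 : ℝ) / (m + 1) < G 1 ω} := by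
        intro ω hω
        obtain ⟨m, hm⟩ := exists_nat_one_div_lt (show (0:ℝ) < G 1 ω from hω)
        exact Set.mem_iUnion.2 ⟨m, hm⟩
      have hz : ℙ (⋃ m : ℕ, {ω | (1 : ℝ) / (m + 1) < G 1 ω}) = 0 :=
        measure_iUnion_null fun m => hcon _ (by positivity)
      exact hpos.ne' (measure_mono_null hsub hz)
    set q : ℝ≥0∞ := ℙ {ω | c < G 1 ω} with hqdef
    set β : ℝ≥0∞ := ∫⁻ ω, (‖G 1 ω‖₊ : ℝ≥0∞) ∂ℙ with hβdef
    have hβ_top : β ≠ ∞ := hint.2.ne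
    have hβj : ∀ i, 1 ≤ i → ∫⁻ ω, (‖G i ω‖₊ : ℝ≥0∞) ∂ℙ = β := fun i hi =>
      ((hid i hi).comp (measurable_coe_nnreal_ennreal.comp measurable_nnnorm)).lintegral_eq
    have hβ0 : β ≠ 0 := by
      intro h
      rw [hβdef, lintegral_eq_zero_iff ((hmeas 1).nnnorm.coe_nnreal_ennreal)] at h
      have h' : ℙ {ω | ¬ G 1 ω = 0} = 0 := by
        have hae : ∀ᵐ ω ∂(ℙ : Measure Ω), G 1 ω = 0 := by
          filter_upwards [h] with ω hω
          simpa using hω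
        exact ae_iff.1 hae
      refine hpos.ne' (measure_mono_null ?_ h')
      intro ω hω
      exact ne_of_gt hω
    set δe : ℝ≥0∞ := ENNReal.ofReal δ with hδedef
    have hδe1 : δe < 1 := by
      rw [hδedef]
      exact ENNReal.ofReal_lt_one.2 hδ1
    set H : ℕ → Ω → ℝ≥0∞ := fun m ω => ∑' j, δe ^ j * (‖G (m + 1 + j) ω‖₊ : ℝ≥0∞) with hHdef
    have hH𝒯 : ∀ n m, n ≤ m + 1 → Measurable[𝒯 n] (H m) := by
      intro n m hnm
      exact measurable_tsum_ennreal' _ fun j =>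
        measurable_H_term (hG𝒯 n (m + 1 + j) (by omega)) _
    have hHmeas : ∀ m, Measurable (H m) := fun m => (hH𝒯 0 m (by omega)).mono (h𝒯le 0) le_rfl
    set B : ℝ≥0∞ := (1 - δe)⁻¹ * β with hBdef
    have hB_top : B ≠ ∞ := by
      apply ENNReal.mul_ne_top _ hβ_top
      exact ENNReal.inv_ne_top.2 (tsub_pos_of_lt hδe1).ne'
    have hB0 : B ≠ 0 := by
      apply mul_ne_zero _ hβ0
      exact ENNReal.inv_ne_zero.2 (ne_top_of_le_ne_top ENNReal.one_ne_top tsub_le_self)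
    have h2B_top : 2 * B ≠ ∞ := ENNReal.mul_ne_top ENNReal.ofNat_ne_top hB_top
    have h2B0 : 2 * B ≠ 0 := mul_ne_zero two_ne_zero hB0
    have hHint : ∀ m, ∫⁻ ω, H m ω ∂ℙ = B := by
      intro m
      simp only [hHdef]
      rw [lintegral_tsum fun j =>
        ((((hmeas (m + 1 + j)).nnnorm).coe_nnreal_ennreal).const_mul _).aemeasurable]
      have hterm : ∀ j : ℕ, ∫⁻ ω, δe ^ j * (‖G (m + 1 + j) ω‖₊ : ℝ≥0∞) ∂ℙ = δe ^ j * β := by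
        intro j
        rw [lintegral_const_mul _ ((hmeas (m + 1 + j)).nnnorm).coe_nnreal_ennreal,
          hβj (m + 1 + j) (by omega)]
      rw [tsum_congr hterm, ENNReal.tsum_mul_right, ENNReal.tsum_geometric, hBdef]
    have hMar : ∀ m, ℙ {ω | 2 * B ≤ H m ω} ≤ 2⁻¹ := by
      intro m
      have h1 : 2 * B * ℙ {ω | 2 * B ≤ H m ω} ≤ ∫⁻ ω, H m ω ∂ℙ :=
        mul_meas_ge_le_lintegral (hHmeas m) (2 * B)
      rw [hHint m] at h1
      have h2 : ℙ {ω | 2 * B ≤ H m ω} ≤ B / (2 * B) := by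
        rw [ENNReal.le_div_iff_mul_le (Or.inl h2B0) (Or.inl h2B_top), mul_comm]
        exact h1
      refine h2.trans_eq ?_
      rw [div_eq_mul_inv, ENNReal.mul_inv (Or.inl two_ne_zero) (Or.inl ENNReal.ofNat_ne_top),
        mul_comm (2 : ℝ≥0∞)⁻¹ _, ← mul_assoc, ENNReal.mul_inv_cancel hB0 hB_top, one_mul]
    have hTl : ∀ m, (2 : ℝ≥0∞)⁻¹ ≤ ℙ {ω | H m ω < 2 * B} := by
      intro m
      have hcompl : {ω | H m ω < 2 * B} = {ω | 2 * B ≤ H m ω}ᶜ := by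
        ext ω; simp [not_le]
      have hms : MeasurableSet {ω | 2 * B ≤ H m ω} := hHmeas m measurableSet_Ici
      rw [hcompl, prob_compl_eq_one_sub hms]
      calc (2 : ℝ≥0∞)⁻¹ = 1 - 2⁻¹ := ENNReal.one_sub_inv_two.symm
        _ ≤ 1 - ℙ {ω | 2 * B ≤ H m ω} := tsub_le_tsub_left (hMar m) 1
    have hHsum : ∀ m ω, H m ω < 2 * B →
        Summable (fun j => δ ^ j * |G (m + 1 + j) ω|) ∧
        (∑' j, δ ^ j * |G (m + 1 + j) ω|) ≤ (2 * B).toReal := by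
      intro m ω hω
      set f : ℕ → ℝ≥0 := fun j => δ.toNNReal ^ j * ‖G (m + 1 + j) ω‖₊ with hfdef
      have hcoe : ∀ j, ((f j : ℝ≥0) : ℝ≥0∞) = δe ^ j * (‖G (m + 1 + j) ω‖₊ : ℝ≥0∞) := by
        intro j
        simp only [hfdef]
        rw [ENNReal.coe_mul, ENNReal.coe_pow]
        rfl
      have hHeq : H m ω = ((∑' j, f j : ℝ≥0) : ℝ≥0∞) := by
        have h1 : H m ω = ∑' j, ((f j : ℝ≥0) : ℝ≥0∞) := (tsum_congr fun j => (hcoe j).symm)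
        by_cases hs : Summable f
        · rw [h1, ENNReal.coe_tsum hs]
        · rw [h1]
          rw [tsum_eq_zero_of_not_summable hs]
          exfalso
          apply hs
          exact ENNReal.tsum_coe_ne_top_iff_summable.1 (by rw [← h1]; exact (hω.trans_le le_top).ne)
      have hfsum : Summable f := by
        refine ENNReal.tsum_coe_ne_top_iff_summable.1 ?_
        rw [← (tsum_congr fun j => (hcoe j).symm : H m ω = _)]
        exact (hω.trans_le le_top).ne
      have hcoe_real : ∀ j, ((f j : ℝ≥0) : ℝ) = δ ^ j * |G (m + 1 + j) ω| := by
        intro j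
        simp only [hfdef]
        rw [NNReal.coe_mul, NNReal.coe_pow, Real.coe_toNNReal δ hδ0.le, coe_nnnorm,
          Real.norm_eq_abs]
      have hrsum : Summable (fun j => δ ^ j * |G (m + 1 + j) ω|) :=
        (NNReal.summable_coe.2 hfsum).congr hcoe_real
      refine ⟨hrsum, ?_⟩
      have h1 : (∑' j, δ ^ j * |G (m + 1 + j) ω|) = (H m ω).toReal := by
        rw [hHeq, ENNReal.coe_toReal, NNReal.coe_tsum]
        exact tsum_congr fun j => (hcoe_real j).symm
      rw [h1]
      exact ENNReal.toReal_mono h2B_top hω.le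
    set R : ℝ := (2 * B).toReal with hRdef
    have hR0 : 0 ≤ R := ENNReal.toReal_nonneg
    obtain ⟨k0, hk0⟩ : ∃ k0 : ℕ, δ ^ k0 < c / (R + 1) :=
      exists_pow_lt_of_lt_one (by positivity) hδ1
    set k : ℕ := k0 + 1 with hkdef
    have hk1 : 1 ≤ k := Nat.le_add_left 1 k0
    have hkR : δ ^ k * R < c := by
      have h1 : δ ^ k ≤ δ ^ k0 := pow_le_pow_of_le_one hδ0.le hδ1.le (Nat.le_succ k0)
      have h2 : δ ^ k * R ≤ (c / (R + 1)) * R :=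
        mul_le_mul_of_nonneg_right (h1.trans hk0.le) hR0
      refine h2.trans_lt ?_
      rw [div_mul_eq_mul_div, div_lt_iff₀ (by positivity)]
      nlinarith
    have hSpos : ∀ n, (q ^ k * 2⁻¹ : ℝ≥0∞) ≤ ℙ {ω | 0 < S n ω} := by
      intro n
      set Bl : Set Ω := ⋂ i ∈ Finset.Icc (n + 1) (n + k), {ω | c < G i ω} with hBldef
      set Tl : Set Ω := {ω | H (n + k) ω < 2 * B} with hTldef
      have hsub : Bl ∩ Tl ⊆ {ω | 0 < S n ω} := by
        rintro ω ⟨hBm, hTm⟩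
        obtain ⟨hsum, hbound⟩ := hHsum (n + k) ω hTm
        have hblock : ∀ j, j < k → c < G (n + 1 + j) ω := by
          intro j hj
          have hmem : n + 1 + j ∈ Finset.Icc (n + 1) (n + k) := Finset.mem_Icc.2 ⟨by omega, by omega⟩
          exact Set.mem_iInter₂.1 hBm (n + 1 + j) hmem
        set a : ℕ → ℝ := fun j => δ ^ j * G (n + 1 + j) ω with hadef
        have habs : ∀ i : ℕ, |a (i + k)| = δ ^ k * (δ ^ i * |G (n + k + 1 + i) ω|) := by
          intro i
          simp only [hadef]
          have hidx : n + 1 + (i + k) = n + k + 1 + i := by omega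
          rw [hidx, abs_mul, abs_pow, abs_of_nonneg hδ0.le, pow_add]
          ring
        have hsum' : Summable (fun i => δ ^ k * (δ ^ i * |G (n + k + 1 + i) ω|)) := by
          have : ∀ i : ℕ, n + k + 1 + i = (n + k) + 1 + i := fun i => rfl
          exact (hsum.mul_left (δ ^ k)).congr fun i => by rw [this i]
        have hsum_shift : Summable (fun i => |a (i + k)|) :=
          hsum'.congr fun i => (habs i).symm
        have hsuma_shift : Summable (fun i => a (i + k)) := summable_abs_iff.1 hsum_shift
        have hsuma : Summable a := (summable_nat_add_iff k).1 hsuma_shift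
        have hsplit : (∑ j ∈ Finset.range k, a j) + ∑' i, a (i + k) = ∑' j, a j :=
          Summable.sum_add_tsum_nat_add k hsuma
        have htail : |∑' i, a (i + k)| ≤ δ ^ k * R := by
          have h1 : |∑' i, a (i + k)| ≤ ∑' i, |a (i + k)| := by
            have hn := norm_tsum_le_tsum_norm (f := fun i => a (i + k))
              (by simpa [Real.norm_eq_abs] using hsum_shift)
            simpa [Real.norm_eq_abs] using hn
          refine h1.trans ?_
          have h2 : (∑' i, |a (i + k)|) = δ ^ k * ∑' i, δ ^ i * |G (n + k + 1 + i) ω| := by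
            rw [tsum_congr habs, tsum_mul_left]
          rw [h2]
          refine mul_le_mul_of_nonneg_left ?_ (pow_nonneg hδ0.le k)
          have : ∀ i : ℕ, n + k + 1 + i = (n + k) + 1 + i := fun i => rfl
          calc (∑' i, δ ^ i * |G (n + k + 1 + i) ω|)
              = ∑' i, δ ^ i * |G ((n + k) + 1 + i) ω| := tsum_congr fun i => by rw [this i]
            _ ≤ R := hbound
        have hhead : c < ∑ j ∈ Finset.range k, a j := by
          have h0mem : (0 : ℕ) ∈ Finset.range k := Finset.mem_range.2 (by omega)
          have hterms : ∀ j ∈ Finset.range k, 0 ≤ a j := by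
            intro j hj
            have hGj : 0 < G (n + 1 + j) ω := lt_trans hc (hblock j (Finset.mem_range.1 hj))
            exact le_of_lt (mul_pos (pow_pos hδ0 j) hGj)
          have hsingle : a 0 ≤ ∑ j ∈ Finset.range k, a j :=
            Finset.single_le_sum hterms h0mem
          have ha0 : c < a 0 := by
            simp only [hadef, pow_zero, one_mul]
            exact hblock 0 (by omega)
          exact lt_of_lt_of_le ha0 hsingle
        have hSeq : S n ω = (∑ j ∈ Finset.range k, a j) + ∑' i, a (i + k) := by
          rw [hsplit]
        show 0 < S n ω
        rw [hSeq]
        have hneg : -(δ ^ k * R) ≤ ∑' i, a (i + k) := by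
          have := neg_abs_le (∑' i, a (i + k))
          linarith [abs_nonneg (∑' i, a (i + k)), htail]
        linarith
      have hdisj : Disjoint (↑(Finset.Icc (n + 1) (n + k)) : Set ℕ) {i : ℕ | n + k + 1 ≤ i} := by
        rw [Set.disjoint_left]
        intro i hi1 hi2
        simp only [Finset.coe_Icc, Set.mem_Icc] at hi1
        simp only [Set.mem_setOf_eq] at hi2
        omega
      have hIndepBT : Indep (⨆ i ∈ (↑(Finset.Icc (n + 1) (n + k)) : Set ℕ), m' i)
          (⨆ i ∈ {i : ℕ | n + k + 1 ≤ i}, m' i) ℙ :=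
        indep_iSup_of_disjoint h_le hI hdisj
      have hBl_meas : MeasurableSet[⨆ i ∈ (↑(Finset.Icc (n + 1) (n + k)) : Set ℕ), m' i] Bl := by
        rw [hBldef]
        refine MeasurableSet.biInter (Finset.Icc (n + 1) (n + k)).countable_toSet fun i hi => ?_
        have hle : m' i ≤ ⨆ i ∈ (↑(Finset.Icc (n + 1) (n + k)) : Set ℕ), m' i :=
          le_iSup₂ (f := fun i (_ : i ∈ (↑(Finset.Icc (n + 1) (n + k)) : Set ℕ)) => m' i) i hi
        exact hle _ ((hGm' i) measurableSet_Ioi)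
      have hTl_meas : MeasurableSet[⨆ i ∈ {i : ℕ | n + k + 1 ≤ i}, m' i] Tl := by
        have hHm : Measurable[⨆ i ∈ {i : ℕ | n + k + 1 ≤ i}, m' i] (H (n + k)) := by
          apply measurable_tsum_ennreal'
          intro j
          have hle : m' (n + k + 1 + j) ≤ ⨆ i ∈ {i : ℕ | n + k + 1 ≤ i}, m' i :=
            le_iSup₂ (f := fun i (_ : i ∈ {i : ℕ | n + k + 1 ≤ i}) => m' i) (n + k + 1 + j)
              (Nat.le_add_right _ _)
          exact measurable_H_term ((hGm' _).mono hle le_rfl) _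
        exact hHm measurableSet_Iio
      have hPmul : ℙ (Bl ∩ Tl) = ℙ Bl * ℙ Tl :=
        (Indep_iff _ _ _).1 hIndepBT Bl Tl hBl_meas hTl_meas
      have hPBl : ℙ Bl = q ^ k := by
        rw [hBldef, hI.meas_biInter (s := fun i => {ω | c < G i ω}) (fun i _ => (hGm' i) measurableSet_Ioi)]
        have hfac : ∀ i ∈ Finset.Icc (n + 1) (n + k), ℙ {ω | c < G i ω} = q := by
          intro i hi
          have hi1 : 1 ≤ i := by have := (Finset.mem_Icc.1 hi).1; omega
          have := (hid i hi1).measure_mem_eq (measurableSet_Ioi (a := c))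
          simpa [Set.preimage, Set.mem_Ioi] using this
        rw [Finset.prod_congr rfl hfac, Finset.prod_const, Nat.card_Icc]
        congr 1
        omega
      calc q ^ k * 2⁻¹ ≤ q ^ k * ℙ Tl := mul_le_mul_right (hTl (n + k)) _
        _ = ℙ Bl * ℙ Tl := by rw [hPBl]
        _ = ℙ (Bl ∩ Tl) := hPmul.symm
        _ ≤ ℙ {ω | 0 < S n ω} := measure_mono hsub
    refine ⟨ℙ {ω | 0 < G 1 ω} * (q ^ k * 2⁻¹), ?_, ?_⟩
    · refine mul_ne_zero hpos.ne' (mul_ne_zero (pow_ne_zero k hq0) ?_)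
      exact ENNReal.inv_ne_zero.2 ENNReal.ofNat_ne_top
    · have hmain : ∀ n, 1 ≤ n → ℙ {ω | 0 < G 1 ω} * (q ^ k * 2⁻¹) ≤ ℙ (E n) := by
        intro n hn
        have hsub2 : {ω | 0 < G n ω} ∩ {ω | 0 < S n ω} ⊆ E n := fun ω hω =>
          ⟨n, le_rfl, hω.1, hω.2⟩
        have hdisj : Disjoint ({n} : Set ℕ) {i : ℕ | n + 1 ≤ i} := by
          rw [Set.disjoint_left]
          intro i hi1 hi2
          simp only [Set.mem_singleton_iff] at hi1
          simp only [Set.mem_setOf_eq] at hi2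
          omega
        have hIndepn : Indep (⨆ i ∈ ({n} : Set ℕ), m' i)
            (⨆ i ∈ {i : ℕ | n + 1 ≤ i}, m' i) ℙ :=
          indep_iSup_of_disjoint h_le hI hdisj
        have h1meas : MeasurableSet[⨆ i ∈ ({n} : Set ℕ), m' i] {ω | 0 < G n ω} := by
          have hle : m' n ≤ ⨆ i ∈ ({n} : Set ℕ), m' i :=
            le_iSup₂ (f := fun i (_ : i ∈ ({n} : Set ℕ)) => m' i) n rfl
          exact hle _ ((hGm' n) measurableSet_Ioi)
        have h2meas : MeasurableSet[⨆ i ∈ {i : ℕ | n + 1 ≤ i}, m' i] {ω | 0 < S n ω} := by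
          have hSm : Measurable[⨆ i ∈ {i : ℕ | n + 1 ≤ i}, m' i] (S n) := by
            apply measurable_tsum_real
            intro j
            have hle : m' (n + 1 + j) ≤ ⨆ i ∈ {i : ℕ | n + 1 ≤ i}, m' i :=
              le_iSup₂ (f := fun i (_ : i ∈ {i : ℕ | n + 1 ≤ i}) => m' i) (n + 1 + j)
                (Nat.le_add_right _ _)
            exact ((hGm' _).mono hle le_rfl).const_mul _
          exact hSm measurableSet_Ioi
        have hPn : ℙ ({ω | 0 < G n ω} ∩ {ω | 0 < S n ω})
            = ℙ {ω | 0 < G n ω} * ℙ {ω | 0 < S n ω} :=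
          (Indep_iff _ _ _).1 hIndepn _ _ h1meas h2meas
        have hGn : ℙ {ω | 0 < G n ω} = ℙ {ω | 0 < G 1 ω} := by
          have := (hid n hn).measure_mem_eq (measurableSet_Ioi (a := (0 : ℝ)))
          simpa [Set.preimage, Set.mem_Ioi] using this
        calc ℙ {ω | 0 < G 1 ω} * (q ^ k * 2⁻¹)
            ≤ ℙ {ω | 0 < G 1 ω} * ℙ {ω | 0 < S n ω} := mul_le_mul_right (hSpos n) _
          _ = ℙ {ω | 0 < G n ω} * ℙ {ω | 0 < S n ω} := by rw [hGn]
          _ = ℙ ({ω | 0 < G n ω} ∩ {ω | 0 < S n ω}) := hPn.symm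
          _ ≤ ℙ (E n) := measure_mono hsub2
      intro n
      rcases Nat.eq_zero_or_pos n with hn | hn
      · subst hn
        exact (hmain 1 le_rfl).trans (measure_mono (hE_anti (Nat.zero_le 1)))
      · exact hmain n hn
  obtain ⟨ε, hε0, hεE⟩ := key
  have hE_nmeas : ∀ n, MeasurableSet (E n) := fun n => h𝒯le n _ (hE_meas n)
  have htmeas : MeasurableSet t := MeasurableSet.iInter fun n => hE_nmeas n
  have hεt : ε ≤ ℙ t := by
    have := tendsto_measure_iInter_atTop (μ := ℙ) (s := E)
      (fun n => (hE_nmeas n).nullMeasurableSet) hE_anti ⟨0, measure_ne_top _ _⟩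
    exact ge_of_tendsto' this fun n => hεE n
  have ht1 : ℙ t = 1 := h01.resolve_left (fun h => hε0 (le_antisymm (h ▸ hεt) zero_le))
  -- conclude
  have hae : ∀ᵐ ω ∂(ℙ : Measure Ω), ω ∈ t := by
    rw [MeasureTheory.ae_iff]
    exact (prob_compl_eq_zero_iff htmeas).2 ht1
  filter_upwards [hae] with ω hω
  have h1 : ω ∈ E 1 := Set.mem_iInter.1 hω 1
  obtain ⟨I, hI1, hGpos, hSpos⟩ := h1
  refine ⟨I, hI1, hGpos, ?_⟩
  have heq : (∑' j : ℕ, δ ^ (I + j) * G (I + j + 1) ω) = δ ^ I * S I ω := by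
    rw [hSdef]
    rw [← tsum_mul_left]
    congr 1
    funext j
    have hj : I + j + 1 = I + 1 + j := by omega
    rw [hj, pow_add, mul_assoc]
  rw [heq]
  exact mul_pos (pow_pos hδ0 I) hSpos
end

section
/- Let the two walkers' scopes be intervals (on the discrete torus) with cardinalities n_L and n_R, intersection of cardinality n_∩, and union of cardinality n_∪ = n_L + n_R - n_∩. If each walker jumps to the position of the maximum of i.i.d. atomless fitnesses indexed by its scope (using a common family of fitnesses on the union), then the probability that both walkers select the same position equals n_∩/n_∪. -/
open MeasureTheory ProbabilityTheory
open scoped ENNReal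

/-- Pushing forward a product of copies of `μ` along precomposition with a
permutation gives back the same product measure. -/
lemma pi_map_comp_perm {κ : Type*} [Fintype κ] (μ : Measure ℝ) [IsProbabilityMeasure μ]
    (σ : κ ≃ κ) :
    Measure.map (fun f : κ → ℝ => f ∘ σ) (Measure.pi fun _ => μ)
      = Measure.pi (fun _ => μ) := by
  have hg : Measurable (fun f : κ → ℝ => f ∘ σ) :=
    measurable_pi_lambda _ fun k => measurable_pi_apply (σ k)
  refine (Measure.pi_eq fun s hs => ?_).symm
  rw [Measure.map_apply hg (MeasurableSet.univ_pi hs)]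
  have hpre : (fun f : κ → ℝ => f ∘ σ) ⁻¹' Set.pi Set.univ s
      = Set.pi Set.univ (fun m => s (σ.symm m)) := by
    ext f
    simp only [Set.mem_preimage, Set.mem_univ_pi, Function.comp_apply]
    constructor
    · intro h m
      have := h (σ.symm m)
      rwa [Equiv.apply_symm_apply] at this
    · intro h k
      have := h (σ k)
      rwa [Equiv.symm_apply_apply] at this
  rw [hpre, Measure.pi_pi]
  exact Equiv.prod_comp σ.symm (fun k => μ (s k))

/-- The product measure of the "coordinate `a` is maximal" set does not depend on `a`. -/
lemma pi_max_coord_eq {κ : Type*} [Fintype κ] [DecidableEq κ] (μ : Measure ℝ)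
    [IsProbabilityMeasure μ] (a b : κ) :
    Measure.pi (fun _ : κ => μ) {f : κ → ℝ | ∀ m, f m ≤ f a}
      = Measure.pi (fun _ : κ => μ) {f : κ → ℝ | ∀ m, f m ≤ f b} := by
  have hA : ∀ c : κ, MeasurableSet {f : κ → ℝ | ∀ m, f m ≤ f c} := by
    intro c
    have : {f : κ → ℝ | ∀ m, f m ≤ f c} = ⋂ m : κ, {f | f m ≤ f c} := by
      ext f; simp [Set.mem_iInter]
    rw [this]
    exact MeasurableSet.iInter fun m =>
      measurableSet_le (measurable_pi_apply m) (measurable_pi_apply c)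
  set σ : κ ≃ κ := Equiv.swap a b
  have hg : Measurable (fun f : κ → ℝ => f ∘ σ) :=
    measurable_pi_lambda _ fun k => measurable_pi_apply (σ k)
  have hpre : (fun f : κ → ℝ => f ∘ σ) ⁻¹' {f : κ → ℝ | ∀ m, f m ≤ f b}
      = {f : κ → ℝ | ∀ m, f m ≤ f a} := by
    ext f
    simp only [Set.mem_preimage, Set.mem_setOf_eq, Function.comp_apply]
    have hσb : σ b = a := Equiv.swap_apply_right a b
    constructor
    · intro h m
      have := h (σ.symm m)
      rwa [Equiv.apply_symm_apply, hσb] at this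
    · intro h m
      rw [hσb]
      exact h (σ m)
  calc Measure.pi (fun _ : κ => μ) {f : κ → ℝ | ∀ m, f m ≤ f a}
      = Measure.pi (fun _ : κ => μ)
          ((fun f : κ → ℝ => f ∘ σ) ⁻¹' {f : κ → ℝ | ∀ m, f m ≤ f b}) := by rw [hpre]
    _ = (Measure.map (fun f : κ → ℝ => f ∘ σ) (Measure.pi fun _ => μ))
          {f : κ → ℝ | ∀ m, f m ≤ f b} := (Measure.map_apply hg (hA b)).symm
    _ = Measure.pi (fun _ : κ => μ) {f : κ → ℝ | ∀ m, f m ≤ f b} := by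
        rw [pi_map_comp_perm]

/-- Joint law of an i.i.d. family restricted to a finite index set is the product measure. -/
lemma joint_law_pi {Ω ι : Type*} [DecidableEq ι] [MeasureSpace Ω]
    [IsProbabilityMeasure (ℙ : Measure Ω)]
    (U : Finset ι) (F : ι → Ω → ℝ) (hmeas : ∀ i, Measurable (F i))
    (hindep : iIndepFun F ℙ)
    (μ : Measure ℝ) [IsProbabilityMeasure μ]
    (hμ : ∀ i ∈ U, Measure.map (F i) ℙ = μ) :
    Measure.map (fun ω (k : U) => F k ω) ℙ = Measure.pi (fun _ : U => μ) := by
  have hX : Measurable (fun ω (k : U) => F k ω) :=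
    measurable_pi_lambda _ fun k => hmeas k
  refine (Measure.pi_eq fun s hs => ?_).symm
  rw [Measure.map_apply hX (MeasurableSet.univ_pi hs)]
  set sets : ι → Set ℝ := fun j => if h : j ∈ U then s ⟨j, h⟩ else Set.univ with hsets
  have hsetsU : ∀ k : U, sets (k : ι) = s k := by
    intro k
    simp only [hsets, dif_pos k.2]
  have hpre : (fun ω (k : U) => F k ω) ⁻¹' Set.pi Set.univ s
      = ⋂ j ∈ U, F j ⁻¹' sets j := by
    ext ω
    simp only [Set.mem_preimage, Set.mem_univ_pi, Set.mem_iInter]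
    constructor
    · intro h j hj
      have := h ⟨j, hj⟩
      rwa [← hsetsU ⟨j, hj⟩] at this
    · intro h k
      have := h (k : ι) k.2
      rwa [hsetsU k] at this
  have hsetsmeas : ∀ j ∈ U, MeasurableSet (sets j) := by
    intro j hj
    simp only [hsets, dif_pos hj]
    exact hs _
  rw [hpre, hindep.measure_inter_preimage_eq_mul U hsetsmeas]
  rw [← Finset.prod_attach U (fun j => (ℙ : Measure Ω) (F j ⁻¹' sets j))]
  rw [Finset.univ_eq_attach]
  refine Finset.prod_congr rfl fun k _ => ?_
  rw [hsetsU k, ← Measure.map_apply (hmeas k) (hs k), hμ k k.2]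

/-- Ties between two independent atomless random variables have probability zero. -/
lemma tie_prob_zero {Ω ι : Type*} [MeasureSpace Ω]
    [IsProbabilityMeasure (ℙ : Measure Ω)]
    (F : ι → Ω → ℝ) (hmeas : ∀ i, Measurable (F i))
    (hindep : iIndepFun F ℙ)
    (hatom : ∀ i (x : ℝ), (ℙ : Measure Ω) {ω | F i ω = x} = 0)
    {i j : ι} (hij : i ≠ j) :
    (ℙ : Measure Ω) {ω | F i ω = F j ω} = 0 := by
  have h := hindep.indepFun hij
  have hmap := (indepFun_iff_map_prod_eq_prod_map_map (hmeas i).aemeasurable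
    (hmeas j).aemeasurable).1 h
  have hD : MeasurableSet {p : ℝ × ℝ | p.1 = p.2} :=
    measurableSet_eq_fun measurable_fst measurable_snd
  have hset : {ω | F i ω = F j ω} = (fun ω => (F i ω, F j ω)) ⁻¹' {p | p.1 = p.2} := rfl
  rw [hset, ← Measure.map_apply ((hmeas i).prodMk (hmeas j)) hD, hmap,
    Measure.prod_apply hD]
  have hslice : ∀ x : ℝ,
      (Measure.map (F j) ℙ) (Prod.mk x ⁻¹' {p : ℝ × ℝ | p.1 = p.2}) = 0 := by
    intro x
    have hx : Prod.mk x ⁻¹' {p : ℝ × ℝ | p.1 = p.2} = {x} := by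
      ext y; simp [eq_comm]
    rw [hx, Measure.map_apply (hmeas j) (measurableSet_singleton x)]
    exact hatom j x
  simp only [hslice]
  exact lintegral_zero

/-- Coalescence probability of two walkers: if both walkers jump to the argmax of a
common family of i.i.d. atomless fitnesses over their respective scopes, the probability
that they select the same position equals `n_∩ / n_∪`. -/
theorem coalescence_probability {Ω ι : Type*} [DecidableEq ι] [MeasureSpace Ω]
    [IsProbabilityMeasure (ℙ : Measure Ω)]
    (NL NR : Finset ι) (hcap : (NL ∩ NR).Nonempty)
    (F : ι → Ω → ℝ)
    (hmeas : ∀ i, Measurable (F i))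
    (hindep : iIndepFun F ℙ)
    (hid : ∀ i j, IdentDistrib (F i) (F j) ℙ ℙ)
    (hatom : ∀ i (x : ℝ), (ℙ : Measure Ω) {ω | F i ω = x} = 0) :
    (ℙ : Measure Ω)
        {ω | ∃ i ∈ NL ∩ NR,
          (∀ j ∈ NL, F j ω ≤ F i ω) ∧ (∀ j ∈ NR, F j ω ≤ F i ω)}
      = ((NL ∩ NR).card : ℝ≥0∞) / ((NL ∪ NR).card : ℝ≥0∞) := by
  obtain ⟨i₀, hi₀I⟩ := hcap
  set U : Finset ι := NL ∪ NR with hUdef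
  set I : Finset ι := NL ∩ NR with hIdef
  have hIU : I ⊆ U := Finset.inter_subset_union
  have hi₀U : i₀ ∈ U := hIU hi₀I
  set μ : Measure ℝ := Measure.map (F i₀) ℙ with hμdef
  haveI : IsProbabilityMeasure μ := Measure.isProbabilityMeasure_map (hmeas i₀).aemeasurable
  have hμ : ∀ i ∈ U, Measure.map (F i) ℙ = μ := fun i _ => (hid i i₀).map_eq
  have hjoint := joint_law_pi U F hmeas hindep μ hμ
  set X : Ω → (U → ℝ) := fun ω (k : U) => F k ω with hXdef
  have hX : Measurable X := measurable_pi_lambda _ fun k => hmeas k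
  set E : ι → Set Ω := fun i => {ω | ∀ j ∈ U, F j ω ≤ F i ω} with hEdef
  -- the event is the union over the intersection
  have hset : {ω | ∃ i ∈ NL ∩ NR,
        (∀ j ∈ NL, F j ω ≤ F i ω) ∧ (∀ j ∈ NR, F j ω ≤ F i ω)}
      = ⋃ i ∈ I, E i := by
    ext ω
    simp only [Set.mem_setOf_eq, Set.mem_iUnion, hEdef, Set.mem_setOf_eq, exists_prop]
    refine exists_congr fun i => and_congr_right fun _ => ?_
    constructor
    · rintro ⟨h1, h2⟩ j hj
      rcases Finset.mem_union.1 hj with h | h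
      exacts [h1 j h, h2 j h]
    · intro h
      exact ⟨fun j hj => h j (Finset.mem_union_left _ hj),
        fun j hj => h j (Finset.mem_union_right _ hj)⟩
  have hEmeas : ∀ i, MeasurableSet (E i) := by
    intro i
    have : E i = ⋂ j ∈ U, {ω | F j ω ≤ F i ω} := by
      ext ω; simp [hEdef]
    rw [this]
    exact MeasurableSet.biInter U.countable_toSet fun j _ =>
      measurableSet_le (hmeas j) (hmeas i)
  -- pairwise a.e. disjointness
  have hdisj : ∀ i ∈ U, ∀ j ∈ U, i ≠ j → (ℙ : Measure Ω) (E i ∩ E j) = 0 := by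
    intro i hi j hj hij
    refine measure_mono_null ?_ (tie_prob_zero F hmeas hindep hatom hij)
    rintro ω ⟨h1, h2⟩
    exact le_antisymm (h2 i hi) (h1 j hj)
  have hsum : ∀ s : Finset ι, s ⊆ U →
      (ℙ : Measure Ω) (⋃ i ∈ s, E i) = ∑ i ∈ s, (ℙ : Measure Ω) (E i) := by
    intro s hs
    refine measure_biUnion_finset₀ ?_ fun i _ => (hEmeas i).nullMeasurableSet
    intro i hi j hj hij
    exact hdisj i (hs hi) j (hs hj) hij
  -- all probabilities `ℙ (E i)` for `i ∈ U` coincide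
  have hEc : ∀ i ∈ U, (ℙ : Measure Ω) (E i) = (ℙ : Measure Ω) (E i₀) := by
    have hEpi : ∀ i (hi : i ∈ U), (ℙ : Measure Ω) (E i)
        = Measure.pi (fun _ : U => μ) {f : U → ℝ | ∀ m : U, f m ≤ f ⟨i, hi⟩} := by
      intro i hi
      have hA : MeasurableSet {f : U → ℝ | ∀ m : U, f m ≤ f ⟨i, hi⟩} := by
        have : {f : U → ℝ | ∀ m : U, f m ≤ f ⟨i, hi⟩}
            = ⋂ m : U, {f | f m ≤ f ⟨i, hi⟩} := by
          ext f; simp [Set.mem_iInter]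
        rw [this]
        exact MeasurableSet.iInter fun m =>
          measurableSet_le (measurable_pi_apply m) (measurable_pi_apply _)
      have hEX : E i = X ⁻¹' {f : U → ℝ | ∀ m : U, f m ≤ f ⟨i, hi⟩} := by
        ext ω
        simp only [hEdef, Set.mem_setOf_eq, Set.mem_preimage, hXdef]
        exact ⟨fun h m => h m m.2, fun h j hj => h ⟨j, hj⟩⟩
      rw [hEX, ← Measure.map_apply hX hA, hjoint]
    intro i hi
    rw [hEpi i hi, hEpi i₀ hi₀U]
    exact pi_max_coord_eq μ (⟨i, hi⟩ : U) (⟨i₀, hi₀U⟩ : U)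
  -- the events over `U` cover everything
  have huniv : (⋃ i ∈ U, E i) = Set.univ := by
    refine Set.eq_univ_of_forall fun ω => ?_
    obtain ⟨i, hiU, hmax⟩ := U.exists_max_image (fun j => F j ω) ⟨i₀, hi₀U⟩
    exact Set.mem_biUnion hiU hmax
  set c : ℝ≥0∞ := (ℙ : Measure Ω) (E i₀) with hcdef
  have hone : (U.card : ℝ≥0∞) * c = 1 := by
    have h1 : (ℙ : Measure Ω) (⋃ i ∈ U, E i) = 1 := by
      rw [huniv]; exact measure_univ
    rw [hsum U le_rfl] at h1
    calc (U.card : ℝ≥0∞) * c = ∑ _i ∈ U, c := by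
          rw [Finset.sum_const, nsmul_eq_mul]
      _ = ∑ i ∈ U, (ℙ : Measure Ω) (E i) := Finset.sum_congr rfl fun i hi => (hEc i hi).symm
      _ = 1 := h1
  have hUne : (U.card : ℝ≥0∞) ≠ 0 := by
    simp only [ne_eq, Nat.cast_eq_zero, Finset.card_eq_zero]
    intro h
    exact absurd (h ▸ hi₀U) (Finset.notMem_empty i₀)
  have hUnt : (U.card : ℝ≥0∞) ≠ ⊤ := ENNReal.natCast_ne_top _
  have hc : c = (U.card : ℝ≥0∞)⁻¹ := by
    rw [← one_mul c, ← ENNReal.inv_mul_cancel hUne hUnt, mul_assoc, hone, mul_one]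
  rw [hset, hsum I hIU]
  calc ∑ i ∈ I, (ℙ : Measure Ω) (E i) = ∑ _i ∈ I, c :=
        Finset.sum_congr rfl fun i hi => hEc i (hIU hi)
    _ = (I.card : ℝ≥0∞) * c := by rw [Finset.sum_const, nsmul_eq_mul]
    _ = (I.card : ℝ≥0∞) / (U.card : ℝ≥0∞) := by rw [hc, div_eq_mul_inv]
end
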